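/- In the binary i.i.d. model with the two-threshold SPRT defined in the context, the stopping time N = min(N_0, N_1) satisfies limsup_{T→∞} 𝔼_0[N] / log T ≤ c / D(p_0‖p_1) and limsup_{T→∞} 𝔼_1[N] / log T ≤ 1 / D(p_1‖p_0). -/

import Mathlib

open MeasureTheory Filter
open scoped ENNReal

lemma sprt_meas_pred {Obs : Type*} [Fintype Obs] [MeasurableSpace Obs]
    [MeasurableSingletonClass Obs] [Nonempty Obs]
    {Ω : Type*} [MeasurableSpace Ω] (μ : Measure Ω) (p : Obs → ℝ)
    (Y : ℕ → Ω → Obs) (hYmeas : ∀ k, Measurable (Y k))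
    (hiid : ∀ (n : ℕ) (ys : ℕ → Obs),
      μ {ω | ∀ k < n, Y k ω = ys k} = ∏ k ∈ Finset.range n, ENNReal.ofReal (p (ys k)))
    (n : ℕ) (F : (Fin n → Obs) → Prop) [DecidablePred F] :
    MeasurableSet {ω | F (fun k : Fin n => Y k ω)} ∧
    μ {ω | F (fun k : Fin n => Y k ω)}
      = ∑ ys ∈ Finset.univ.filter F, ∏ k : Fin n, ENNReal.ofReal (p (ys k)) := by
  classical
  set ext : (Fin n → Obs) → ℕ → Obs :=
    fun ys k => if h : k < n then ys ⟨k, h⟩ else Classical.arbitrary Obs with hext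
  set A : (Fin n → Obs) → Set Ω := fun ys => {ω | ∀ k < n, Y k ω = ext ys k} with hA
  have hAmeas : ∀ ys, MeasurableSet (A ys) := by
    intro ys
    have : A ys = ⋂ k ∈ Finset.range n, Y k ⁻¹' {ext ys k} := by
      ext ω; simp [hA, Set.mem_iInter]
    rw [this]
    exact MeasurableSet.biInter (Finset.range n).countable_toSet
      (fun k _ => (hYmeas k) (measurableSet_singleton _))
  have hAmu : ∀ ys, μ (A ys) = ∏ k : Fin n, ENNReal.ofReal (p (ys k)) := by
    intro ys
    rw [hA, hiid n (ext ys),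
      ← Fin.prod_univ_eq_prod_range (fun k => ENNReal.ofReal (p (ext ys k))) n]
    exact Finset.prod_congr rfl fun k _ => by simp [hext, k.isLt]
  have hcover : {ω | F (fun k : Fin n => Y k ω)}
      = ⋃ ys ∈ Finset.univ.filter F, A ys := by
    ext ω
    simp only [Set.mem_setOf_eq, Set.mem_iUnion, Finset.mem_filter, Finset.mem_univ,
      true_and, exists_prop]
    constructor
    · intro h
      refine ⟨fun k => Y k ω, h, fun k hk => ?_⟩
      simp [hA, hext, hk]
    · rintro ⟨ys, hFys, hmem⟩
      have : (fun k : Fin n => Y k ω) = ys := by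
        funext k
        have := hmem k k.isLt
        simpa [hext, k.isLt] using this
      rwa [this]
  have hdisj : (↑(Finset.univ.filter F) : Set (Fin n → Obs)).PairwiseDisjoint A := by
    intro ys _ ys' _ hne
    refine Set.disjoint_left.mpr fun ω h1 h2 => hne ?_
    funext k
    have e1 := h1 k k.isLt
    have e2 := h2 k k.isLt
    simp only [hext, dif_pos k.isLt, Fin.eta] at e1 e2
    rw [← e1, ← e2]
  constructor
  · rw [hcover]
    exact (Finset.univ.filter F).measurableSet_biUnion (fun ys _ => hAmeas ys)
  · rw [hcover, measure_biUnion_finset hdisj (fun ys _ => hAmeas ys)]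
    exact Finset.sum_congr rfl fun ys _ => hAmu ys

lemma sprt_chernoff {Obs : Type*} [Fintype Obs] [MeasurableSpace Obs]
    [MeasurableSingletonClass Obs] [Nonempty Obs]
    {Ω : Type*} [MeasurableSpace Ω] (ℙ0 : Measure Ω)
    (p0 p1 : Obs → ℝ)
    (hp0_nonneg : ∀ y, 0 ≤ p0 y) (hp1_nonneg : ∀ y, 0 ≤ p1 y)
    (hsupp : ∀ y, p0 y = 0 ↔ p1 y = 0)
    (Y : ℕ → Ω → Obs) (hYmeas : ∀ k, Measurable (Y k))
    (hiid0 : ∀ (n : ℕ) (ys : ℕ → Obs),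
      ℙ0 {ω | ∀ k < n, Y k ω = ys k} = ∏ k ∈ Finset.range n, ENNReal.ofReal (p0 (ys k)))
    (c : ℝ) (T : ℝ) (hT : 0 < T) (lam : ℝ) (hlam0 : 0 < lam) (j : ℕ) :
    MeasurableSet {ω | ∏ k ∈ Finset.range j, p0 (Y k ω)
        < T ^ c * ∏ k ∈ Finset.range j, p1 (Y k ω)} ∧
    ℙ0 {ω | ∏ k ∈ Finset.range j, p0 (Y k ω)
        < T ^ c * ∏ k ∈ Finset.range j, p1 (Y k ω)}
      ≤ ENNReal.ofReal (T ^ (c * lam))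
          * (ENNReal.ofReal (∑ y, (p0 y) ^ (1 - lam) * (p1 y) ^ lam)) ^ j := by
  classical
  set h : Obs → ℝ := fun y => (p0 y) ^ (1 - lam) * (p1 y) ^ lam with hh
  have hh0 : ∀ y, 0 ≤ h y := fun y =>
    mul_nonneg (Real.rpow_nonneg (hp0_nonneg y) _) (Real.rpow_nonneg (hp1_nonneg y) _)
  set F' : (Fin j → Obs) → Prop := fun ys =>
    ∏ k : Fin j, p0 (ys k) < T ^ c * ∏ k : Fin j, p1 (ys k) with hF'
  have hBeq : {ω | ∏ k ∈ Finset.range j, p0 (Y k ω)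
      < T ^ c * ∏ k ∈ Finset.range j, p1 (Y k ω)}
      = {ω | F' (fun k : Fin j => Y k ω)} := by
    ext ω
    simp only [Set.mem_setOf_eq, hF']
    rw [Fin.prod_univ_eq_prod_range (fun k => p0 (Y k ω)) j,
      Fin.prod_univ_eq_prod_range (fun k => p1 (Y k ω)) j]
  obtain ⟨hmeas, hmu⟩ := sprt_meas_pred ℙ0 p0 Y hYmeas hiid0 j F'
  refine ⟨hBeq ▸ hmeas, ?_⟩
  rw [hBeq, hmu]
  -- per-tuple Chernoff step
  have step1 : ∀ ys ∈ Finset.univ.filter F',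
      ∏ k : Fin j, p0 (ys k) ≤ T ^ (c * lam) * ∏ k : Fin j, h (ys k) := by
    intro ys hys
    have hcond : ∏ k : Fin j, p0 (ys k) < T ^ c * ∏ k : Fin j, p1 (ys k) :=
      (Finset.mem_filter.mp hys).2
    by_cases hzero : ∃ k, p0 (ys k) = 0
    · obtain ⟨k, hk⟩ := hzero
      rw [Finset.prod_eq_zero (Finset.mem_univ k) hk]
      exact mul_nonneg (Real.rpow_nonneg hT.le _)
        (Finset.prod_nonneg fun k _ => hh0 (ys k))
    · push_neg at hzero
      have hpos0 : ∀ k, 0 < p0 (ys k) := fun k => (hp0_nonneg _).lt_of_ne (Ne.symm (hzero k))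
      have hpos1 : ∀ k, 0 < p1 (ys k) := by
        intro k
        rcases (hp1_nonneg (ys k)).lt_or_eq with h1 | h1
        · exact h1
        · exact absurd ((hsupp (ys k)).mpr h1.symm) (hzero k)
      set a : ℝ := ∏ k : Fin j, p0 (ys k) with ha
      set b : ℝ := ∏ k : Fin j, p1 (ys k) with hb
      have ha0 : 0 < a := Finset.prod_pos fun k _ => hpos0 k
      have hb0 : 0 < b := Finset.prod_pos fun k _ => hpos1 k
      have hprodh : ∏ k : Fin j, h (ys k) = a ^ (1 - lam) * b ^ lam := by
        rw [hh, ha, hb]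
        simp only
        rw [Finset.prod_mul_distrib,
          Real.finset_prod_rpow _ _ (fun k _ => hp0_nonneg (ys k)) _,
          Real.finset_prod_rpow _ _ (fun k _ => hp1_nonneg (ys k)) _]
      have h1 : a ^ lam ≤ T ^ (c * lam) * b ^ lam := by
        calc a ^ lam ≤ (T ^ c * b) ^ lam :=
              Real.rpow_le_rpow ha0.le hcond.le hlam0.le
          _ = (T ^ c) ^ lam * b ^ lam :=
              Real.mul_rpow (Real.rpow_nonneg hT.le c) hb0.le
          _ = T ^ (c * lam) * b ^ lam := by rw [← Real.rpow_mul hT.le]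
      have h2 : a = a ^ (1 - lam) * a ^ lam := by
        rw [← Real.rpow_add ha0]
        norm_num
      calc a = a ^ (1 - lam) * a ^ lam := h2
        _ ≤ a ^ (1 - lam) * (T ^ (c * lam) * b ^ lam) :=
            mul_le_mul_of_nonneg_left h1 (Real.rpow_nonneg ha0.le _)
        _ = T ^ (c * lam) * (a ^ (1 - lam) * b ^ lam) := by ring
        _ = T ^ (c * lam) * ∏ k : Fin j, h (ys k) := by rw [hprodh]
  have hZpow : (∑ y, h y) ^ j = ∑ ys : Fin j → Obs, ∏ k : Fin j, h (ys k) := by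
    have h1 : (∑ y, h y) ^ j = ∏ _k : Fin j, ∑ y, h y := by
      rw [Finset.prod_const]
      simp
    rw [h1, Finset.prod_univ_sum, Fintype.piFinset_univ]
  have realineq : ∑ ys ∈ Finset.univ.filter F', ∏ k : Fin j, p0 (ys k)
      ≤ T ^ (c * lam) * (∑ y, h y) ^ j := by
    calc ∑ ys ∈ Finset.univ.filter F', ∏ k : Fin j, p0 (ys k)
        ≤ ∑ ys ∈ Finset.univ.filter F', T ^ (c * lam) * ∏ k : Fin j, h (ys k) :=
          Finset.sum_le_sum step1
      _ ≤ ∑ ys : Fin j → Obs, T ^ (c * lam) * ∏ k : Fin j, h (ys k) :=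
          Finset.sum_le_sum_of_subset_of_nonneg (Finset.filter_subset _ _)
            (fun ys _ _ => mul_nonneg (Real.rpow_nonneg hT.le _)
              (Finset.prod_nonneg fun k _ => hh0 (ys k)))
      _ = T ^ (c * lam) * ∑ ys : Fin j → Obs, ∏ k : Fin j, h (ys k) := by
          rw [Finset.mul_sum]
      _ = T ^ (c * lam) * (∑ y, h y) ^ j := by rw [hZpow]
  calc ∑ ys ∈ Finset.univ.filter F', ∏ k : Fin j, ENNReal.ofReal (p0 (ys k))
      = ENNReal.ofReal (∑ ys ∈ Finset.univ.filter F', ∏ k : Fin j, p0 (ys k)) := by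
        rw [ENNReal.ofReal_sum_of_nonneg
          (fun ys _ => Finset.prod_nonneg fun k _ => hp0_nonneg (ys k))]
        exact Finset.sum_congr rfl fun ys _ =>
          (ENNReal.ofReal_prod_of_nonneg fun k _ => hp0_nonneg (ys k)).symm
    _ ≤ ENNReal.ofReal (T ^ (c * lam) * (∑ y, h y) ^ j) :=
        ENNReal.ofReal_le_ofReal realineq
    _ = ENNReal.ofReal (T ^ (c * lam)) * (ENNReal.ofReal (∑ y, h y)) ^ j := by
        rw [ENNReal.ofReal_mul (Real.rpow_nonneg hT.le _),
          ENNReal.ofReal_pow (Finset.sum_nonneg fun y _ => hh0 y)]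

lemma sprt_count (x : ℕ∞) (m : ℕ) (g : ℕ → ℝ≥0∞)
    (hg : ∀ n : ℕ, ((m + n : ℕ) : ℕ∞) < x → 1 ≤ g n) :
    (x : ℝ≥0∞) ≤ (m : ℝ≥0∞) + ∑' n, g n := by
  induction x using ENat.recTopCoe with
  | top =>
    have h1 : ∀ n, 1 ≤ g n := fun n => hg n (by exact_mod_cast WithTop.coe_lt_top (m + n))
    have h2 : (⊤ : ℝ≥0∞) = ∑' _ : ℕ, (1 : ℝ≥0∞) :=
      (ENNReal.tsum_const_eq_top_of_ne_zero one_ne_zero).symm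
    calc (⊤ : ℝ≥0∞) = ∑' _ : ℕ, (1 : ℝ≥0∞) := h2
      _ ≤ ∑' n, g n := ENNReal.tsum_le_tsum h1
      _ ≤ _ := le_add_self
  | coe j =>
    rcases le_or_gt j m with h | h
    · calc ((j : ℕ∞) : ℝ≥0∞) = (j : ℝ≥0∞) := by simp
        _ ≤ (m : ℝ≥0∞) := by exact_mod_cast h
        _ ≤ _ := le_self_add
    · set d := j - m with hd
      have hjd : j = m + d := by omega
      have hds : (d : ℝ≥0∞) ≤ ∑' n, g n := by
        have h1 : ∀ n ∈ Finset.range d, (1:ℝ≥0∞) ≤ g n := by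
          intro n hn
          refine hg n ?_
          have : m + n < j := by simp at hn; omega
          exact_mod_cast this
        calc (d : ℝ≥0∞) = (Finset.range d).card • (1:ℝ≥0∞) := by simp
          _ ≤ ∑ n ∈ Finset.range d, g n := Finset.card_nsmul_le_sum _ _ _ h1
          _ ≤ ∑' n, g n := ENNReal.sum_le_tsum _
      calc ((j : ℕ∞) : ℝ≥0∞) = (m : ℝ≥0∞) + (d : ℝ≥0∞) := by
            rw [hjd]; push_cast; ring
        _ ≤ _ := add_le_add_right hds _

lemma sprt_main {Obs : Type*} [Fintype Obs] [MeasurableSpace Obs]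
    [MeasurableSingletonClass Obs] [Nonempty Obs]
    {Ω : Type*} [MeasurableSpace Ω] (ℙ0 : Measure Ω) (hprob0 : IsProbabilityMeasure ℙ0)
    (p0 p1 : Obs → ℝ)
    (hp0_nonneg : ∀ y, 0 ≤ p0 y) (hp1_nonneg : ∀ y, 0 ≤ p1 y)
    (hsupp : ∀ y, p0 y = 0 ↔ p1 y = 0)
    (Y : ℕ → Ω → Obs) (hYmeas : ∀ k, Measurable (Y k))
    (hiid0 : ∀ (n : ℕ) (ys : ℕ → Obs),
      ℙ0 {ω | ∀ k < n, Y k ω = ys k} = ∏ k ∈ Finset.range n, ENNReal.ofReal (p0 (ys k)))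
    (c : ℝ) (hc : 0 < c) (F : ℝ → Ω → ℕ∞)
    (hF : ∀ T ω, F T ω ≤ sInf {n : ℕ∞ | ∃ m' : ℕ, (m' : ℕ∞) = n ∧ 1 ≤ m' ∧
        T ^ c * ∏ k ∈ Finset.range m', p1 (Y k ω) ≤ ∏ k ∈ Finset.range m', p0 (Y k ω)})
    (lam : ℝ) (hlam0 : 0 < lam)
    (hZlt : ∑ y, (p0 y) ^ (1 - lam) * (p1 y) ^ lam < 1) :
    Filter.limsup
      (fun T : ℝ => (∫⁻ ω, ((F T ω : ℕ∞) : ℝ≥0∞) ∂ℙ0) / ENNReal.ofReal (Real.log T))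
      Filter.atTop
      ≤ ENNReal.ofReal (c * lam / (1 - ∑ y, (p0 y) ^ (1 - lam) * (p1 y) ^ lam)) := by
  classical
  set Z : ℝ := ∑ y, (p0 y) ^ (1 - lam) * (p1 y) ^ lam with hZdef
  have hZ0 : 0 ≤ Z := Finset.sum_nonneg fun y _ =>
    mul_nonneg (Real.rpow_nonneg (hp0_nonneg y) _) (Real.rpow_nonneg (hp1_nonneg y) _)
  set z : ℝ≥0∞ := ENNReal.ofReal Z with hzdef
  have hz1 : z < 1 := by
    rw [hzdef]
    exact ENNReal.ofReal_lt_one.mpr hZlt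
  set K : ℝ≥0∞ := (1 - z)⁻¹ with hKdef
  have hKne : K ≠ ⊤ := ENNReal.inv_ne_top.mpr (tsub_pos_of_lt hz1).ne'
  set q : ℝ := c * lam / (1 - Z) with hqdef
  have hq0 : 0 ≤ q := div_nonneg (by positivity) (by linarith)
  -- eventual bound
  have hev : ∀ᶠ T : ℝ in atTop,
      (∫⁻ ω, ((F T ω : ℕ∞) : ℝ≥0∞) ∂ℙ0) / ENNReal.ofReal (Real.log T)
        ≤ ENNReal.ofReal q + (1 + K) / ENNReal.ofReal (Real.log T) := by
    filter_upwards [eventually_ge_atTop (Real.exp 1)] with T hT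
    have hT0 : 0 < T := lt_of_lt_of_le (Real.exp_pos 1) hT
    have hT1 : 1 ≤ Real.log T := by
      calc (1:ℝ) = Real.log (Real.exp 1) := (Real.log_exp 1).symm
        _ ≤ Real.log T := Real.log_le_log (Real.exp_pos 1) hT
    set x : ℝ := q * Real.log T with hxdef
    have hx0 : 0 ≤ x := mul_nonneg hq0 (by linarith)
    set m : ℕ := max 1 ⌈x⌉₊ with hmdef
    have hm1 : 1 ≤ m := le_max_left _ _
    have hmx : (m : ℝ) ≤ x + 1 := by
      rw [hmdef, Nat.cast_max]
      refine max_le (by push_cast; linarith) (Nat.ceil_lt_add_one hx0).le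
    have hxm : x ≤ (m : ℝ) :=
      le_trans (Nat.le_ceil x) (by exact_mod_cast le_max_right 1 ⌈x⌉₊)
    -- threshold condition
    have hTm : ENNReal.ofReal (T ^ (c * lam)) * z ^ m ≤ 1 := by
      have hreal : T ^ (c * lam) * Z ^ m ≤ 1 := by
        have he1 : T ^ (c * lam) = Real.exp (Real.log T * (c * lam)) := by
          rw [Real.rpow_def_of_pos hT0]
        have he2 : Z ^ m ≤ Real.exp ((m : ℝ) * (Z - 1)) := by
          rw [Real.exp_nat_mul]
          exact pow_le_pow_left₀ hZ0 (by linarith [Real.add_one_le_exp (Z - 1)]) m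
        have hexp : Real.log T * (c * lam) + (m : ℝ) * (Z - 1) ≤ 0 := by
          have h1 : x * (1 - Z) ≤ (m : ℝ) * (1 - Z) :=
            mul_le_mul_of_nonneg_right hxm (by linarith)
          have hZne : (1:ℝ) - Z ≠ 0 := by linarith
          have h2 : x * (1 - Z) = c * lam * Real.log T := by
            rw [hxdef, hqdef]
            field_simp
          nlinarith
        calc T ^ (c * lam) * Z ^ m
            ≤ Real.exp (Real.log T * (c * lam)) * Real.exp ((m : ℝ) * (Z - 1)) := by
              rw [he1]
              exact mul_le_mul_of_nonneg_left he2 (Real.exp_pos _).le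
          _ = Real.exp (Real.log T * (c * lam) + (m : ℝ) * (Z - 1)) := (Real.exp_add _ _).symm
          _ ≤ Real.exp 0 := Real.exp_le_exp.mpr hexp
          _ = 1 := Real.exp_zero
      calc ENNReal.ofReal (T ^ (c * lam)) * z ^ m
          = ENNReal.ofReal (T ^ (c * lam) * Z ^ m) := by
            rw [ENNReal.ofReal_mul (Real.rpow_nonneg hT0.le _), ENNReal.ofReal_pow hZ0]
        _ ≤ 1 := by
            rw [← ENNReal.ofReal_one]
            exact ENNReal.ofReal_le_ofReal hreal
    -- integral bound
    set B : ℕ → Set Ω := fun j => {ω | ∏ k ∈ Finset.range j, p0 (Y k ω)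
        < T ^ c * ∏ k ∈ Finset.range j, p1 (Y k ω)} with hBdef
    have hBmeas : ∀ j, MeasurableSet (B j) := fun j =>
      (sprt_chernoff ℙ0 p0 p1 hp0_nonneg hp1_nonneg hsupp Y hYmeas hiid0 c T hT0 lam hlam0 j).1
    have hBle : ∀ j, ℙ0 (B j) ≤ ENNReal.ofReal (T ^ (c * lam)) * z ^ j := fun j =>
      (sprt_chernoff ℙ0 p0 p1 hp0_nonneg hp1_nonneg hsupp Y hYmeas hiid0 c T hT0 lam hlam0 j).2
    have hpoint : ∀ ω, ((F T ω : ℕ∞) : ℝ≥0∞)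
        ≤ (m : ℝ≥0∞) + ∑' n : ℕ, (B (m + n)).indicator 1 ω := by
      intro ω
      refine sprt_count (F T ω) m _ fun n hn => ?_
      have hlt : ((m + n : ℕ) : ℕ∞) < sInf {n : ℕ∞ | ∃ m' : ℕ, (m' : ℕ∞) = n ∧ 1 ≤ m' ∧
          T ^ c * ∏ k ∈ Finset.range m', p1 (Y k ω) ≤ ∏ k ∈ Finset.range m', p0 (Y k ω)} :=
        lt_of_lt_of_le hn (hF T ω)
      have hmem : ω ∈ B (m + n) := by
        by_contra hB
        have : ((m + n : ℕ) : ℕ∞) ∈ {n : ℕ∞ | ∃ m' : ℕ, (m' : ℕ∞) = n ∧ 1 ≤ m' ∧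
            T ^ c * ∏ k ∈ Finset.range m', p1 (Y k ω) ≤ ∏ k ∈ Finset.range m', p0 (Y k ω)} := by
          refine ⟨m + n, rfl, by omega, ?_⟩
          have := hB
          rw [hBdef] at this
          simp only [Set.mem_setOf_eq, not_lt] at this
          exact this
        exact absurd (sInf_le this) (not_le.mpr hlt)
      rw [Set.indicator_of_mem hmem]
      rfl
    have hint : (∫⁻ ω, ((F T ω : ℕ∞) : ℝ≥0∞) ∂ℙ0) ≤ (m : ℝ≥0∞) + K := by
      have h1 : (∫⁻ ω, ((F T ω : ℕ∞) : ℝ≥0∞) ∂ℙ0)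
          ≤ ∫⁻ ω, ((m : ℝ≥0∞) + ∑' n : ℕ, (B (m + n)).indicator 1 ω) ∂ℙ0 :=
        lintegral_mono hpoint
      have h2 : (∫⁻ ω, ((m : ℝ≥0∞) + ∑' n : ℕ, (B (m + n)).indicator 1 ω) ∂ℙ0)
          = (m : ℝ≥0∞) * ℙ0 Set.univ + ∑' n : ℕ, ℙ0 (B (m + n)) := by
        rw [lintegral_add_left measurable_const, lintegral_const,
          lintegral_tsum (fun n => (measurable_one.indicator (hBmeas (m + n))).aemeasurable)]
        congr 1
        exact tsum_congr fun n => lintegral_indicator_one (hBmeas (m + n))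
      have h3 : ∑' n : ℕ, ℙ0 (B (m + n)) ≤ K := by
        calc ∑' n : ℕ, ℙ0 (B (m + n))
            ≤ ∑' n : ℕ, ENNReal.ofReal (T ^ (c * lam)) * z ^ (m + n) :=
              ENNReal.tsum_le_tsum fun n => hBle (m + n)
          _ = ENNReal.ofReal (T ^ (c * lam)) * z ^ m * ∑' n : ℕ, z ^ n := by
              rw [← ENNReal.tsum_mul_left]
              exact tsum_congr fun n => by rw [pow_add]; ring
          _ = ENNReal.ofReal (T ^ (c * lam)) * z ^ m * K := by
              rw [ENNReal.tsum_geometric, hKdef]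
          _ ≤ 1 * K := mul_le_mul_left hTm K
          _ = K := one_mul K
      calc (∫⁻ ω, ((F T ω : ℕ∞) : ℝ≥0∞) ∂ℙ0)
          ≤ (m : ℝ≥0∞) * ℙ0 Set.univ + ∑' n : ℕ, ℙ0 (B (m + n)) := h1.trans h2.le
        _ = (m : ℝ≥0∞) + ∑' n : ℕ, ℙ0 (B (m + n)) := by
            rw [hprob0.measure_univ, mul_one]
        _ ≤ (m : ℝ≥0∞) + K := add_le_add_right h3 _
    -- divide by log T
    set L : ℝ≥0∞ := ENNReal.ofReal (Real.log T) with hLdef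
    have hL0 : L ≠ 0 := by
      rw [hLdef]
      simp only [ne_eq, ENNReal.ofReal_eq_zero, not_le]
      linarith
    have hLtop : L ≠ ⊤ := ENNReal.ofReal_ne_top
    have hm' : (m : ℝ≥0∞) ≤ ENNReal.ofReal x + 1 := by
      calc (m : ℝ≥0∞) = ENNReal.ofReal (m : ℝ) := by
            rw [ENNReal.ofReal_natCast]
        _ ≤ ENNReal.ofReal (x + 1) := ENNReal.ofReal_le_ofReal hmx
        _ ≤ ENNReal.ofReal x + ENNReal.ofReal 1 := ENNReal.ofReal_add_le
        _ = ENNReal.ofReal x + 1 := by rw [ENNReal.ofReal_one]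
    have hxq : ENNReal.ofReal x = ENNReal.ofReal q * L := by
      rw [hxdef, hLdef, ENNReal.ofReal_mul hq0]
    calc (∫⁻ ω, ((F T ω : ℕ∞) : ℝ≥0∞) ∂ℙ0) / L
        ≤ ((m : ℝ≥0∞) + K) / L := ENNReal.div_le_div_right hint L
      _ ≤ (ENNReal.ofReal x + (1 + K)) / L := by
          refine ENNReal.div_le_div_right ?_ L
          calc (m : ℝ≥0∞) + K ≤ (ENNReal.ofReal x + 1) + K := add_le_add_left hm' K
            _ = ENNReal.ofReal x + (1 + K) := by ring
      _ = ENNReal.ofReal x / L + (1 + K) / L := ENNReal.add_div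
      _ = ENNReal.ofReal q + (1 + K) / L := by
          rw [hxq, mul_div_assoc, ENNReal.div_self hL0 hLtop, mul_one]
  -- limsup step
  have htend : Tendsto (fun T : ℝ => ENNReal.ofReal q + (1 + K) / ENNReal.ofReal (Real.log T))
      atTop (nhds (ENNReal.ofReal q + 0)) := by
    refine Tendsto.add tendsto_const_nhds ?_
    have hlog : Tendsto (fun T : ℝ => ENNReal.ofReal (Real.log T)) atTop (nhds ⊤) :=
      ENNReal.tendsto_ofReal_atTop.comp Real.tendsto_log_atTop
    have hinv : Tendsto (fun T : ℝ => (ENNReal.ofReal (Real.log T))⁻¹) atTop (nhds 0) := by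
      have := ENNReal.tendsto_inv_iff.mpr hlog
      simpa using this
    have := ENNReal.Tendsto.const_mul hinv (Or.inr (by
      exact ENNReal.add_ne_top.mpr ⟨ENNReal.one_ne_top, hKne⟩))
    simpa [div_eq_mul_inv, mul_zero] using this
  refine le_trans (limsup_le_limsup hev) ?_
  rw [htend.limsup_eq, add_zero]

lemma sprt_D_pos {Obs : Type*} [Fintype Obs] (p0 p1 : Obs → ℝ)
    (hp0_nonneg : ∀ y, 0 ≤ p0 y) (hp1_nonneg : ∀ y, 0 ≤ p1 y)
    (hp0_sum : ∑ y, p0 y = 1) (hp1_sum : ∑ y, p1 y = 1)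
    (hne : p0 ≠ p1) (hsupp : ∀ y, p0 y = 0 ↔ p1 y = 0) :
    0 < ∑ y, p0 y * Real.log (p0 y / p1 y) := by
  obtain ⟨y0, hy0⟩ : ∃ y, p0 y ≠ p1 y := Function.ne_iff.mp hne
  have hy0pos : 0 < p0 y0 := by
    rcases (hp0_nonneg y0).lt_or_eq with h | h
    · exact h
    · exact absurd (((hsupp y0).mp h.symm ▸ h.symm) : p0 y0 = p1 y0) hy0
  have key : ∑ y, p0 y * Real.log (p1 y / p0 y) < 0 := by
    have hle : ∀ y ∈ Finset.univ, p0 y * Real.log (p1 y / p0 y) ≤ p1 y - p0 y := by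
      intro y _
      rcases (hp0_nonneg y).lt_or_eq with h | h
      · have h1 : 0 < p1 y := by
          rcases (hp1_nonneg y).lt_or_eq with h1 | h1
          · exact h1
          · exact absurd ((hsupp y).mpr h1.symm) h.ne'
        have hlog : Real.log (p1 y / p0 y) ≤ p1 y / p0 y - 1 :=
          Real.log_le_sub_one_of_pos (div_pos h1 h)
        calc p0 y * Real.log (p1 y / p0 y) ≤ p0 y * (p1 y / p0 y - 1) := by
              exact mul_le_mul_of_nonneg_left hlog h.le
          _ = p1 y - p0 y := by field_simp
      · simp [← h, hp1_nonneg y]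
    have hlt : p0 y0 * Real.log (p1 y0 / p0 y0) < p1 y0 - p0 y0 := by
      have h1 : 0 < p1 y0 := by
        rcases (hp1_nonneg y0).lt_or_eq with h1 | h1
        · exact h1
        · exact absurd ((hsupp y0).mpr h1.symm) hy0pos.ne'
      have hne1 : p1 y0 / p0 y0 ≠ 1 := by
        intro h
        rw [div_eq_one_iff_eq hy0pos.ne'] at h
        exact hy0 h.symm
      have hlog : Real.log (p1 y0 / p0 y0) < p1 y0 / p0 y0 - 1 :=
        Real.log_lt_sub_one_of_pos (div_pos h1 hy0pos) hne1
      calc p0 y0 * Real.log (p1 y0 / p0 y0) < p0 y0 * (p1 y0 / p0 y0 - 1) := by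
            exact (mul_lt_mul_iff_right₀ hy0pos).mpr hlog
        _ = p1 y0 - p0 y0 := by field_simp
    calc ∑ y, p0 y * Real.log (p1 y / p0 y) < ∑ y, (p1 y - p0 y) :=
          Finset.sum_lt_sum hle ⟨y0, Finset.mem_univ y0, hlt⟩
      _ = 0 := by rw [Finset.sum_sub_distrib, hp0_sum, hp1_sum]; ring
  have : ∑ y, p0 y * Real.log (p0 y / p1 y) = -∑ y, p0 y * Real.log (p1 y / p0 y) := by
    rw [← Finset.sum_neg_distrib]
    exact Finset.sum_congr rfl fun y _ => by
      rw [← inv_div (p1 y) (p0 y), Real.log_inv]; ring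
  rw [this]
  linarith

lemma sprt_Z_limit {Obs : Type*} [Fintype Obs] (p0 p1 : Obs → ℝ)
    (hp0_nonneg : ∀ y, 0 ≤ p0 y) (hp1_nonneg : ∀ y, 0 ≤ p1 y)
    (hp0_sum : ∑ y, p0 y = 1)
    (hsupp : ∀ y, p0 y = 0 ↔ p1 y = 0) :
    Tendsto (fun lam : ℝ => (1 - ∑ y, (p0 y) ^ (1 - lam) * (p1 y) ^ lam) / lam)
      (nhdsWithin 0 (Set.Ioi 0)) (nhds (∑ y, p0 y * Real.log (p0 y / p1 y))) := by
  classical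
  set D : ℝ := ∑ y, p0 y * Real.log (p0 y / p1 y) with hD
  set s : Finset Obs := Finset.univ.filter (fun y => 0 < p0 y) with hs
  set Zt : ℝ → ℝ := fun lam => ∑ y ∈ s, p0 y * (p1 y / p0 y) ^ lam with hZt
  have hpos : ∀ y ∈ s, 0 < p0 y := fun y hy => (Finset.mem_filter.mp hy).2
  have hpos1 : ∀ y ∈ s, 0 < p1 y := by
    intro y hy
    rcases (hp1_nonneg y).lt_or_eq with h | h
    · exact h
    · exact absurd ((hsupp y).mpr h.symm) (hpos y hy).ne'
  have hderiv : HasDerivAt Zt (∑ y ∈ s, p0 y * Real.log (p1 y / p0 y)) 0 := by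
    rw [hZt]
    apply HasDerivAt.fun_sum
    intro y hy
    have hr : 0 < p1 y / p0 y := div_pos (hpos1 y hy) (hpos y hy)
    have h1 := ((Real.hasStrictDerivAt_const_rpow hr 0).hasDerivAt).const_mul (p0 y)
    simpa using h1
  have hZt0 : Zt 0 = 1 := by
    rw [hZt]
    simp only [Real.rpow_zero, mul_one]
    rw [hs, Finset.sum_filter_of_ne (fun y _ h => (hp0_nonneg y).lt_of_ne (Ne.symm h))]
    exact hp0_sum
  have hDeq : ∑ y ∈ s, p0 y * Real.log (p1 y / p0 y) = -D := by
    rw [hD, ← Finset.sum_neg_distrib]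
    rw [show ∑ y, -(p0 y * Real.log (p0 y / p1 y))
        = ∑ y ∈ s, -(p0 y * Real.log (p0 y / p1 y)) by
      rw [hs]
      refine (Finset.sum_filter_of_ne fun y _ h => ?_).symm
      rcases (hp0_nonneg y).lt_or_eq with h0 | h0
      · exact h0
      · exact absurd (by simp [← h0]) h]
    refine Finset.sum_congr rfl fun y hy => ?_
    rw [← inv_div (p0 y) (p1 y), Real.log_inv]
    ring
  rw [hDeq] at hderiv
  have hslope : Tendsto (fun lam => (1 - Zt lam) / lam)
      (nhdsWithin 0 (Set.Ioi 0)) (nhds D) := by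
    have h1 := hasDerivAt_iff_tendsto_slope.mp hderiv
    have h2 : Tendsto (slope Zt 0) (nhdsWithin 0 (Set.Ioi 0)) (nhds (-D)) :=
      h1.mono_left (nhdsWithin_mono 0 (fun x hx => ne_of_gt hx))
    have h3 := h2.neg
    rw [neg_neg] at h3
    refine h3.congr fun lam => ?_
    rw [slope_def_field, hZt0, sub_zero, ← neg_div, neg_sub]
  refine hslope.congr' ?_
  have hlt1 : ∀ᶠ lam : ℝ in nhdsWithin 0 (Set.Ioi 0), lam < 1 :=
    (eventually_lt_nhds (zero_lt_one)).filter_mono nhdsWithin_le_nhds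
  filter_upwards [hlt1, self_mem_nhdsWithin] with lam hlam1 hlam0
  have hZeq : Zt lam = ∑ y, (p0 y) ^ (1 - lam) * (p1 y) ^ lam := by
    have h1 : Zt lam = ∑ y ∈ s, (p0 y) ^ (1 - lam) * (p1 y) ^ lam := by
      rw [hZt]
      refine Finset.sum_congr rfl fun y hy => ?_
      rw [Real.div_rpow (hp1_nonneg y) (hp0_nonneg y), Real.rpow_sub (hpos y hy),
        Real.rpow_one]
      have h2 : (p0 y) ^ lam ≠ 0 := (Real.rpow_pos_of_pos (hpos y hy) lam).ne'
      field_simp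
    rw [h1, hs]
    refine Finset.sum_filter_of_ne fun y _ h => ?_
    rcases (hp0_nonneg y).lt_or_eq with h0 | h0
    · exact h0
    · exfalso
      apply h
      rw [← h0, Real.zero_rpow (by linarith : (1:ℝ) - lam ≠ 0), zero_mul]
  rw [hZeq]

lemma sprt_aux {Obs : Type*} [Fintype Obs] [MeasurableSpace Obs]
    [MeasurableSingletonClass Obs]
    {Ω : Type*} [MeasurableSpace Ω] (ℙ0 : Measure Ω) (hprob0 : IsProbabilityMeasure ℙ0)
    (p0 p1 : Obs → ℝ)
    (hp0_nonneg : ∀ y, 0 ≤ p0 y) (hp1_nonneg : ∀ y, 0 ≤ p1 y)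
    (hp0_sum : ∑ y, p0 y = 1) (hp1_sum : ∑ y, p1 y = 1)
    (hne : p0 ≠ p1) (hsupp : ∀ y, p0 y = 0 ↔ p1 y = 0)
    (Y : ℕ → Ω → Obs) (hYmeas : ∀ k, Measurable (Y k))
    (hiid0 : ∀ (n : ℕ) (ys : ℕ → Obs),
      ℙ0 {ω | ∀ k < n, Y k ω = ys k} = ∏ k ∈ Finset.range n, ENNReal.ofReal (p0 (ys k)))
    (c : ℝ) (hc : 0 < c) (F : ℝ → Ω → ℕ∞)
    (hF : ∀ T ω, F T ω ≤ sInf {n : ℕ∞ | ∃ m' : ℕ, (m' : ℕ∞) = n ∧ 1 ≤ m' ∧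
        T ^ c * ∏ k ∈ Finset.range m', p1 (Y k ω) ≤ ∏ k ∈ Finset.range m', p0 (Y k ω)}) :
    Filter.limsup
      (fun T : ℝ => (∫⁻ ω, ((F T ω : ℕ∞) : ℝ≥0∞) ∂ℙ0) / ENNReal.ofReal (Real.log T))
      Filter.atTop
      ≤ ENNReal.ofReal (c / ∑ y, p0 y * Real.log (p0 y / p1 y)) := by
  classical
  have hObs : Nonempty Obs := by
    by_contra h
    rw [not_nonempty_iff] at h
    rw [Finset.univ_eq_empty, Finset.sum_empty] at hp0_sum
    exact zero_ne_one hp0_sum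
  set D : ℝ := ∑ y, p0 y * Real.log (p0 y / p1 y) with hD
  have hDpos : 0 < D :=
    sprt_D_pos p0 p1 hp0_nonneg hp1_nonneg hp0_sum hp1_sum hne hsupp
  refine ENNReal.le_of_forall_pos_le_add fun ε hε _ => ?_
  -- choose lam
  set Z : ℝ → ℝ := fun lam => ∑ y, (p0 y) ^ (1 - lam) * (p1 y) ^ lam with hZ
  set Q : ℝ → ℝ := fun lam => (1 - Z lam) / lam with hQ
  have hqlim : Tendsto Q (nhdsWithin 0 (Set.Ioi 0)) (nhds D) :=
    sprt_Z_limit p0 p1 hp0_nonneg hp1_nonneg hp0_sum hsupp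
  have h1 : ∀ᶠ lam in nhdsWithin 0 (Set.Ioi 0), D / 2 < Q lam :=
    hqlim.eventually (eventually_gt_nhds (by linarith))
  have h2 : Tendsto (fun lam => c / Q lam) (nhdsWithin 0 (Set.Ioi 0)) (nhds (c / D)) :=
    tendsto_const_nhds.div hqlim hDpos.ne'
  have h3 : ∀ᶠ lam in nhdsWithin 0 (Set.Ioi 0), c / Q lam < c / D + (ε : ℝ) :=
    h2.eventually (eventually_lt_nhds (lt_add_of_pos_right _ (by exact_mod_cast hε)))
  obtain ⟨lam, hQgt, hQlt, hmem⟩ := (h1.and (h3.and self_mem_nhdsWithin)).exists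
  have hlam0 : 0 < lam := hmem
  have h1mZ : 0 < 1 - Z lam := by
    have hq : 0 < Q lam := lt_trans (by linarith) hQgt
    have : 1 - Z lam = Q lam * lam := by
      rw [hQ]
      field_simp
    rw [this]
    exact mul_pos hq hlam0
  have hZlt : Z lam < 1 := by linarith
  have hcq : c * lam / (1 - Z lam) = c / Q lam := by
    rw [hQ, div_div_eq_mul_div]
  have hmain := sprt_main ℙ0 hprob0 p0 p1 hp0_nonneg hp1_nonneg hsupp Y hYmeas hiid0
    c hc F hF lam hlam0 hZlt
  refine hmain.trans ?_
  calc ENNReal.ofReal (c * lam / (1 - Z lam))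
      ≤ ENNReal.ofReal (c / D + (ε : ℝ)) := by
        refine ENNReal.ofReal_le_ofReal ?_
        rw [hcq]
        exact hQlt.le
    _ ≤ ENNReal.ofReal (c / D) + ENNReal.ofReal (ε : ℝ) := ENNReal.ofReal_add_le
    _ = ENNReal.ofReal (c / D) + (ε : ℝ≥0∞) := by
        rw [ENNReal.ofReal_coe_nnreal]

/-- **Expected-stopping-time asymptotics of the two-threshold binary SPRT.**
`p0 ≠ p1` are pmfs on a finite set `Obs` with mutually finite KL divergences
(equal supports); under hypothesis `i ∈ {0,1}` the observations are i.i.d.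
with pmf `p i`.  With `c > 0` and, for each threshold `T`,
`N0(T) = min{n ≥ 1 : p0(Y^n) ≥ T^c · p1(Y^n)}`,
`N1(T) = min{n ≥ 1 : p1(Y^n) ≥ T · p0(Y^n)}` and `N = min (N0, N1)`, one has
`limsup_{T→∞} 𝔼_0[N]/log T ≤ c / D(p0‖p1)` and
`limsup_{T→∞} 𝔼_1[N]/log T ≤ 1 / D(p1‖p0)`
(stated in `ℝ≥0∞` so that infinite expectations falsify the bounds). -/
theorem stmt_4 {Obs : Type*} [Fintype Obs]
    [MeasurableSpace Obs] [MeasurableSingletonClass Obs]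
    (p0 p1 : Obs → ℝ)
    (hp0_nonneg : ∀ y, 0 ≤ p0 y) (hp1_nonneg : ∀ y, 0 ≤ p1 y)
    (hp0_sum : ∑ y, p0 y = 1) (hp1_sum : ∑ y, p1 y = 1)
    (hne : p0 ≠ p1)
    (hsupp : ∀ y, p0 y = 0 ↔ p1 y = 0)
    (Ω : Type*) [MeasurableSpace Ω]
    (ℙ0 ℙ1 : Measure Ω)
    (hprob0 : IsProbabilityMeasure ℙ0) (hprob1 : IsProbabilityMeasure ℙ1)
    (Y : ℕ → Ω → Obs) (hYmeas : ∀ k, Measurable (Y k))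
    (hiid0 : ∀ (n : ℕ) (ys : ℕ → Obs),
      ℙ0 {ω | ∀ k < n, Y k ω = ys k}
        = ∏ k ∈ Finset.range n, ENNReal.ofReal (p0 (ys k)))
    (hiid1 : ∀ (n : ℕ) (ys : ℕ → Obs),
      ℙ1 {ω | ∀ k < n, Y k ω = ys k}
        = ∏ k ∈ Finset.range n, ENNReal.ofReal (p1 (ys k)))
    (c : ℝ) (hc : 0 < c) :
    (Filter.limsup
      (fun T : ℝ =>
        (∫⁻ ω,
            ((min
              (sInf {n : ℕ∞ | ∃ m' : ℕ, (m' : ℕ∞) = n ∧ 1 ≤ m' ∧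
                T ^ c * ∏ k ∈ Finset.range m', p1 (Y k ω)
                  ≤ ∏ k ∈ Finset.range m', p0 (Y k ω)})
              (sInf {n : ℕ∞ | ∃ m' : ℕ, (m' : ℕ∞) = n ∧ 1 ≤ m' ∧
                T * ∏ k ∈ Finset.range m', p0 (Y k ω)
                  ≤ ∏ k ∈ Finset.range m', p1 (Y k ω)}) : ℕ∞) : ℝ≥0∞)
          ∂ℙ0)
          / ENNReal.ofReal (Real.log T))
      Filter.atTop
      ≤ ENNReal.ofReal (c / ∑ y, p0 y * Real.log (p0 y / p1 y)))
    ∧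
    (Filter.limsup
      (fun T : ℝ =>
        (∫⁻ ω,
            ((min
              (sInf {n : ℕ∞ | ∃ m' : ℕ, (m' : ℕ∞) = n ∧ 1 ≤ m' ∧
                T ^ c * ∏ k ∈ Finset.range m', p1 (Y k ω)
                  ≤ ∏ k ∈ Finset.range m', p0 (Y k ω)})
              (sInf {n : ℕ∞ | ∃ m' : ℕ, (m' : ℕ∞) = n ∧ 1 ≤ m' ∧
                T * ∏ k ∈ Finset.range m', p0 (Y k ω)
                  ≤ ∏ k ∈ Finset.range m', p1 (Y k ω)}) : ℕ∞) : ℝ≥0∞)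
          ∂ℙ1)
          / ENNReal.ofReal (Real.log T))
      Filter.atTop
      ≤ ENNReal.ofReal (1 / ∑ y, p1 y * Real.log (p1 y / p0 y))) := by
  constructor
  · exact sprt_aux ℙ0 hprob0 p0 p1 hp0_nonneg hp1_nonneg hp0_sum hp1_sum hne hsupp
      Y hYmeas hiid0 c hc _ (fun T ω => min_le_left _ _)
  · refine sprt_aux ℙ1 hprob1 p1 p0 hp1_nonneg hp0_nonneg hp1_sum hp0_sum
      (Ne.symm hne) (fun y => (hsupp y).symm) Y hYmeas hiid1 1 one_pos _
      (fun T ω => ?_)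
    simp only [Real.rpow_one]
    exact min_le_right _ _
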